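/- A subalgebra basis generates the algebra: let A be a subalgebra of MvPolynomial σ k and let G be a subset of A. If for every nonzero a ∈ A the leading term in_m(a) lies in the k-subalgebra generated by { in_m(g) : g ∈ G, g ≠ 0 }, then Algebra.adjoin k G = A. -/

import Mathlib

set_option maxHeartbeats 1000000
set_option linter.unusedSectionVars false


open MvPolynomial

noncomputable section

variable {σ : Type*} [Fintype σ] {k : Type*} [Field k]

/-- The degree (largest exponent vector) of a polynomial with respect to a monomial order. -/
def MonomialOrder.degree' (m : MonomialOrder σ) (f : MvPolynomial σ k) : σ →₀ ℕ :=
  m.toSyn.symm (f.support.sup fun d => m.toSyn d)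

/-- The leading term of a polynomial with respect to a monomial order. -/
def MonomialOrder.leadTerm (m : MonomialOrder σ) (f : MvPolynomial σ k) : MvPolynomial σ k :=
  monomial (m.degree' f) (f.coeff (m.degree' f))

/-- The initial algebra of a subalgebra `A`: the `k`-subalgebra generated by the leading
terms of the nonzero elements of `A`. -/
def MonomialOrder.initialAlgebra (m : MonomialOrder σ) (A : Subalgebra k (MvPolynomial σ k)) :
    Subalgebra k (MvPolynomial σ k) :=
  Algebra.adjoin k {p | ∃ a ∈ A, a ≠ 0 ∧ p = m.leadTerm a}

namespace MonomialOrder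

variable (m : MonomialOrder σ)

lemma toSyn_degree'_eq (f : MvPolynomial σ k) :
    m.toSyn (m.degree' f) = f.support.sup fun d => m.toSyn d := by
  simp [degree']

lemma degree'_mem_support {f : MvPolynomial σ k} (hf : f ≠ 0) :
    m.degree' f ∈ f.support := by
  obtain ⟨d, hd, he⟩ := Finset.exists_mem_eq_sup f.support
    (by simpa using hf) fun d => m.toSyn d
  have : m.degree' f = d := by rw [degree', he]; exact m.toSyn.symm_apply_apply d
  rwa [this]

lemma leadCoeff_ne_zero {f : MvPolynomial σ k} (hf : f ≠ 0) :
    f.coeff (m.degree' f) ≠ 0 :=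
  MvPolynomial.mem_support_iff.mp (m.degree'_mem_support hf)

lemma le_degree' {f : MvPolynomial σ k} {d : σ →₀ ℕ} (hd : d ∈ f.support) :
    m.toSyn d ≤ m.toSyn (m.degree' f) := by
  rw [toSyn_degree'_eq]; exact Finset.le_sup hd

lemma coeff_mul_degree' (f g : MvPolynomial σ k) :
    (f * g).coeff (m.degree' f + m.degree' g) =
      f.coeff (m.degree' f) * g.coeff (m.degree' g) := by
  classical
  rw [MvPolynomial.coeff_mul]
  apply Finset.sum_eq_single (m.degree' f, m.degree' g)
  · rintro ⟨a, b⟩ hab hne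
    simp only [Finset.HasAntidiagonal.mem_antidiagonal] at hab
    by_contra hc
    have ha : a ∈ f.support := by
      rw [MvPolynomial.mem_support_iff]; intro h; apply hc; simp [h]
    have hb : b ∈ g.support := by
      rw [MvPolynomial.mem_support_iff]; intro h; apply hc; simp [h]
    have hale := m.le_degree' ha
    have hble := m.le_degree' hb
    have hsum : m.toSyn a + m.toSyn b = m.toSyn (m.degree' f) + m.toSyn (m.degree' g) := by
      rw [← map_add, ← map_add, hab]
    have haeq : a = m.degree' f := by
      apply m.toSyn.injective
      by_contra hlt
      exact absurd hsum
        (ne_of_lt (add_lt_add_of_lt_of_le (lt_of_le_of_ne hale hlt) hble))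
    have hbeq : b = m.degree' g := by
      apply m.toSyn.injective
      by_contra hlt
      exact absurd hsum
        (ne_of_lt (add_lt_add_of_le_of_lt hale (lt_of_le_of_ne hble hlt)))
    subst haeq
    subst hbeq
    exact hne rfl
  · intro h
    simp at h

lemma degree'_mul {f g : MvPolynomial σ k} (hf : f ≠ 0) (hg : g ≠ 0) :
    m.degree' (f * g) = m.degree' f + m.degree' g := by
  classical
  have hcoeff : (f * g).coeff (m.degree' f + m.degree' g) ≠ 0 := by
    rw [m.coeff_mul_degree']
    exact mul_ne_zero (m.leadCoeff_ne_zero hf) (m.leadCoeff_ne_zero hg)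
  apply m.toSyn.injective
  apply le_antisymm
  · rw [toSyn_degree'_eq]
    apply Finset.sup_le
    intro e he
    have := MvPolynomial.support_mul f g he
    rw [Finset.mem_add] at this
    obtain ⟨a, ha, b, hb, rfl⟩ := this
    calc m.toSyn (a + b) = m.toSyn a + m.toSyn b := map_add _ _ _
      _ ≤ m.toSyn (m.degree' f) + m.toSyn (m.degree' g) :=
          add_le_add (m.le_degree' ha) (m.le_degree' hb)
      _ = m.toSyn (m.degree' f + m.degree' g) := (map_add _ _ _).symm
  · exact m.le_degree' (MvPolynomial.mem_support_iff.mpr hcoeff)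

lemma leadTerm_mul {f g : MvPolynomial σ k} (hf : f ≠ 0) (hg : g ≠ 0) :
    m.leadTerm (f * g) = m.leadTerm f * m.leadTerm g := by
  rw [leadTerm, leadTerm, leadTerm, monomial_mul, degree'_mul m hf hg, coeff_mul_degree']

lemma leadTerm_monomial (d : σ →₀ ℕ) (c : k) :
    m.leadTerm (monomial d c) = monomial d c := by
  classical
  rcases eq_or_ne c 0 with rfl | hc
  · simp only [monomial_zero]
    rw [leadTerm, degree']
    simp
  · have hs : (monomial d c : MvPolynomial σ k).support = {d} := by
      rw [MvPolynomial.support_monomial, if_neg hc]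
    have hd : m.degree' (monomial d c : MvPolynomial σ k) = d := by
      rw [degree', hs, Finset.sup_singleton]
      exact m.toSyn.symm_apply_apply d
    rw [leadTerm, hd, MvPolynomial.coeff_monomial, if_pos rfl]

lemma leadTerm_one : m.leadTerm (1 : MvPolynomial σ k) = 1 := by
  have := m.leadTerm_monomial (0 : σ →₀ ℕ) (1 : k)
  simpa using this

lemma degree'_smul {c : k} (hc : c ≠ 0) (f : MvPolynomial σ k) :
    m.degree' (c • f) = m.degree' f := by
  unfold degree'
  congr 2
  ext d
  simp [MvPolynomial.mem_support_iff, MvPolynomial.coeff_smul, hc]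

lemma leadTerm_smul {c : k} (hc : c ≠ 0) (f : MvPolynomial σ k) :
    m.leadTerm (c • f) = c • m.leadTerm f := by
  rw [leadTerm, leadTerm, m.degree'_smul hc, MvPolynomial.coeff_smul, smul_monomial]

lemma toSyn_degree'_sub_lt {a b : MvPolynomial σ k}
    (hd : m.degree' b = m.degree' a)
    (hc : b.coeff (m.degree' a) = a.coeff (m.degree' a))
    (hab : a - b ≠ 0) :
    m.toSyn (m.degree' (a - b)) < m.toSyn (m.degree' a) := by
  classical
  set d := m.degree' a with hdef
  have hsupp : ∀ e ∈ (a - b).support, m.toSyn e < m.toSyn d := by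
    intro e he
    have hne : e ≠ d := by
      rintro rfl
      have := MvPolynomial.mem_support_iff.mp he
      rw [MvPolynomial.coeff_sub, hc, sub_self] at this
      exact this rfl
    have hle : m.toSyn e ≤ m.toSyn d := by
      have := MvPolynomial.support_sub σ a b he
      rcases Finset.mem_union.mp this with h | h
      · exact m.le_degree' h
      · rw [← hd] at hdef ⊢
        exact m.le_degree' h
    exact lt_of_le_of_ne hle fun h => hne (m.toSyn.injective h)
  have h0 : (0 : m.syn) < m.toSyn d := by
    rcases eq_or_lt_of_le (bot_le : (⊥ : m.syn) ≤ m.toSyn d) with h0 | h0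
    · exfalso
      obtain ⟨e, he⟩ := (MvPolynomial.support_nonempty.mpr hab)
      exact absurd (hsupp e he) (by rw [← h0]; exact not_lt_bot)
    · exact h0
  rw [toSyn_degree'_eq]
  exact (Finset.sup_lt_iff h0).mpr hsupp

end MonomialOrder

/-- A subalgebra basis generates the algebra. -/
theorem adjoin_eq_of_subalgebraBasis (m : MonomialOrder σ) (A : Subalgebra k (MvPolynomial σ k))
    (G : Set (MvPolynomial σ k)) (hG : G ⊆ (A : Set (MvPolynomial σ k)))
    (h : ∀ a ∈ A, a ≠ 0 →
      m.leadTerm a ∈ Algebra.adjoin k {p | ∃ g ∈ G, g ≠ 0 ∧ p = m.leadTerm g}) :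
    Algebra.adjoin k G = A := by
  classical
  set S : Set (MvPolynomial σ k) := {p | ∃ g ∈ G, g ≠ 0 ∧ p = m.leadTerm g} with hS
  -- every element of the monoid closure of S is the lead term of a nonzero element of adjoin G
  have hclos : ∀ p ∈ Submonoid.closure S,
      ∃ f, f ∈ Algebra.adjoin k G ∧ f ≠ 0 ∧ p = m.leadTerm f := by
    intro p hp
    induction hp using Submonoid.closure_induction with
    | mem p hp =>
      obtain ⟨g, hgG, hg0, rfl⟩ := hp
      exact ⟨g, Algebra.subset_adjoin hgG, hg0, rfl⟩
    | one => exact ⟨1, one_mem _, one_ne_zero, (m.leadTerm_one).symm⟩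
    | mul p q _ _ hip hiq =>
      obtain ⟨f1, hf1, hf10, rfl⟩ := hip
      obtain ⟨f2, hf2, hf20, rfl⟩ := hiq
      exact ⟨f1 * f2, mul_mem hf1 hf2, mul_ne_zero hf10 hf20,
        (m.leadTerm_mul hf10 hf20).symm⟩
  -- for every nonzero a ∈ A there is f ∈ adjoin G with same degree and coeff
  have hmatch : ∀ a ∈ A, a ≠ 0 → ∃ f, f ∈ Algebra.adjoin k G ∧
      m.degree' f = m.degree' a ∧ f.coeff (m.degree' a) = a.coeff (m.degree' a) := by
    intro a haA ha0
    have hmem : m.leadTerm a ∈ Submodule.span k (Submonoid.closure S : Set (MvPolynomial σ k)) := by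
      have h2 : m.leadTerm a ∈ Subalgebra.toSubmodule (Algebra.adjoin k S) := h a haA ha0
      rwa [Algebra.adjoin_eq_span] at h2
    set d := m.degree' a with hdef
    set c := a.coeff d with hcdef
    have hc0 : c ≠ 0 := m.leadCoeff_ne_zero ha0
    obtain ⟨w, hwsupp, hwsum⟩ := Submodule.mem_span_set.mp hmem
    -- the coefficient of d in leadTerm a is c ≠ 0
    have hcoeff : (m.leadTerm a).coeff d = c := by
      rw [MonomialOrder.leadTerm, MvPolynomial.coeff_monomial, if_pos rfl]
    have hsum : (w.sum fun p r => r • p).coeff d = c := by rw [hwsum, hcoeff]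
    have : ∃ p ∈ w.support, ((w p) • p).coeff d ≠ 0 := by
      by_contra hall
      push_neg at hall
      rw [Finsupp.sum, MvPolynomial.coeff_sum] at hsum
      rw [Finset.sum_eq_zero hall] at hsum
      exact hc0 hsum.symm
    obtain ⟨p, hpw, hpne⟩ := this
    have hpS : p ∈ Submonoid.closure S := hwsupp hpw
    obtain ⟨f, hfadj, hf0, rfl⟩ := hclos p hpS
    have hpd : m.degree' f = d := by
      by_contra hne
      apply hpne
      rw [MvPolynomial.coeff_smul, MonomialOrder.leadTerm,
        MvPolynomial.coeff_monomial, if_neg hne, smul_zero]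
    set lc := f.coeff (m.degree' f) with hlc
    have hlc0 : lc ≠ 0 := m.leadCoeff_ne_zero hf0
    refine ⟨(c / lc) • f, Subalgebra.smul_mem _ hfadj _, ?_, ?_⟩
    · rw [m.degree'_smul (div_ne_zero hc0 hlc0), hpd]
    · rw [MvPolynomial.coeff_smul, ← hpd, ← hlc, smul_eq_mul, div_mul_cancel₀ _ hlc0]
  -- main induction
  apply le_antisymm (Algebra.adjoin_le hG)
  intro a haA
  have key : ∀ s : m.syn, ∀ a ∈ A, m.toSyn (m.degree' a) = s → a ∈ Algebra.adjoin k G := by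
    intro s
    induction s using WellFoundedLT.induction with
    | ind s ih =>
      intro a haA hs
      rcases eq_or_ne a 0 with rfl | ha0
      · exact zero_mem _
      · obtain ⟨f, hfadj, hfd, hfc⟩ := hmatch a haA ha0
        rcases eq_or_ne (a - f) 0 with hzero | hne
        · have : a = f := by linear_combination (norm := ring_nf) hzero
          rw [this]; exact hfadj
        · have hlt := m.toSyn_degree'_sub_lt hfd hfc hne
          rw [hs] at hlt
          have hsub : a - f ∈ A := sub_mem haA (Algebra.adjoin_le hG hfadj)
          have := ih _ hlt (a - f) hsub rfl
          have : a = (a - f) + f := by ring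
          rw [this]
          exact add_mem (ih _ hlt (a - f) hsub rfl) hfadj
  exact key _ a haA rfl
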